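/- The algebra A_5 = K[x,y,z]/(x^2, y^2, xz, yz, xy - z^3) is a 6-dimensional local Gorenstein K-algebra: its maximal ideal m has basis the classes of x, y, z, z^2, z^3, and Soc A_5 = m^3 = ⟨z^3⟩ is one-dimensional. -/

import Mathlib

set_option synthInstance.maxHeartbeats 1000000
set_option maxHeartbeats 1000000

open MvPolynomial

namespace Stmt13

variable (K : Type*) [Field K]

/-- exponent triples -/
noncomputable def tri (a b c : ℕ) : Fin 3 →₀ ℕ :=
  Finsupp.single 0 a + Finsupp.single 1 b + Finsupp.single 2 c

@[simp] lemma tri_apply0 (a b c : ℕ) : tri a b c 0 = a := by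
  simp [tri, Finsupp.single_apply]
@[simp] lemma tri_apply1 (a b c : ℕ) : tri a b c 1 = b := by
  simp [tri, Finsupp.single_apply]
@[simp] lemma tri_apply2 (a b c : ℕ) : tri a b c 2 = c := by
  simp [tri, Finsupp.single_apply]

lemma tri_eq_tri {a b c a' b' c' : ℕ} :
    tri a b c = tri a' b' c' ↔ a = a' ∧ b = b' ∧ c = c' := by
  constructor
  · intro h
    refine ⟨?_, ?_, ?_⟩
    · rw [← tri_apply0 a b c, h, tri_apply0]
    · rw [← tri_apply1 a b c, h, tri_apply1]
    · rw [← tri_apply2 a b c, h, tri_apply2]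
  · rintro ⟨rfl, rfl, rfl⟩; rfl

lemma u_decomp (u : Fin 3 →₀ ℕ) : u = tri (u 0) (u 1) (u 2) := by
  ext i; fin_cases i <;> simp

@[simp] lemma tri_single0 (k : ℕ) : Finsupp.single (0 : Fin 3) k = tri k 0 0 := by
  simp [tri]
@[simp] lemma tri_single1 (k : ℕ) : Finsupp.single (1 : Fin 3) k = tri 0 k 0 := by
  simp [tri]
@[simp] lemma tri_single2 (k : ℕ) : Finsupp.single (2 : Fin 3) k = tri 0 0 k := by
  simp [tri]
@[simp] lemma tri_zero : (0 : Fin 3 →₀ ℕ) = tri 0 0 0 := by simp [tri]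

@[simp] lemma tri_sub_tri (a b c a' b' c' : ℕ) :
    tri a b c - tri a' b' c' = tri (a-a') (b-b') (c-c') := by
  ext i; fin_cases i <;> simp [Finsupp.tsub_apply]

@[simp] lemma tri_sub0 (a b c : ℕ) : tri a b c - Finsupp.single 0 1 = tri (a-1) b c := by
  ext i; fin_cases i <;> simp [Finsupp.tsub_apply, Finsupp.single_apply]
@[simp] lemma tri_sub1 (a b c : ℕ) : tri a b c - Finsupp.single 1 1 = tri a (b-1) c := by
  ext i; fin_cases i <;> simp [Finsupp.tsub_apply, Finsupp.single_apply]
@[simp] lemma tri_sub2 (a b c : ℕ) : tri a b c - Finsupp.single 2 1 = tri a b (c-1) := by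
  ext i; fin_cases i <;> simp [Finsupp.tsub_apply, Finsupp.single_apply]

noncomputable def Iid : Ideal (MvPolynomial (Fin 3) K) :=
  Ideal.span {X 0 ^ 2, X 1 ^ 2, X 0 * X 2, X 1 * X 2, X 0 * X 1 - X 2 ^ 3}

lemma memI5 (p r1 r2 r3 r4 r5 : MvPolynomial (Fin 3) K)
    (h : p = r1 * X 0 ^ 2 + r2 * X 1 ^ 2 + r3 * (X 0 * X 2) + r4 * (X 1 * X 2)
      + r5 * (X 0 * X 1 - X 2 ^ 3)) : p ∈ Iid K := by
  subst h
  refine add_mem (add_mem (add_mem (add_mem ?_ ?_) ?_) ?_) ?_ <;>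
    exact Ideal.mul_mem_left _ _ (Ideal.subset_span (by simp))

lemma mem_I_of (a b c : ℕ)
    (h : 2 ≤ a ∨ 2 ≤ b ∨ (1 ≤ a ∧ 1 ≤ c) ∨ (1 ≤ b ∧ 1 ≤ c) ∨ (a = 0 ∧ b = 0 ∧ 4 ≤ c)) :
    (X 0 ^ a * X 1 ^ b * X 2 ^ c : MvPolynomial (Fin 3) K) ∈ Iid K := by
  obtain h | h | ⟨h1, h2⟩ | ⟨h1, h2⟩ | ⟨rfl, rfl, h⟩ := h
  · obtain ⟨a', rfl⟩ := Nat.exists_eq_add_of_le h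
    exact memI5 K _ (X 0 ^ a' * X 1 ^ b * X 2 ^ c) 0 0 0 0 (by ring)
  · obtain ⟨b', rfl⟩ := Nat.exists_eq_add_of_le h
    exact memI5 K _ 0 (X 0 ^ a * X 1 ^ b' * X 2 ^ c) 0 0 0 (by ring)
  · obtain ⟨a', rfl⟩ := Nat.exists_eq_add_of_le h1
    obtain ⟨c', rfl⟩ := Nat.exists_eq_add_of_le h2
    exact memI5 K _ 0 0 (X 0 ^ a' * X 1 ^ b * X 2 ^ c') 0 0 (by ring)
  · obtain ⟨b', rfl⟩ := Nat.exists_eq_add_of_le h1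
    obtain ⟨c', rfl⟩ := Nat.exists_eq_add_of_le h2
    exact memI5 K _ 0 0 0 (X 0 ^ a * X 1 ^ b' * X 2 ^ c') 0 (by ring)
  · obtain ⟨c', rfl⟩ := Nat.exists_eq_add_of_le h
    exact memI5 K _ 0 0 (X 1 * X 2 ^ c') 0 (-(X 2 ^ (c' + 1))) (by ring)

lemma monomial_tri (a b c : ℕ) :
    (monomial (tri a b c) (1 : K)) = X 0 ^ a * X 1 ^ b * X 2 ^ c := by
  rw [X_pow_eq_monomial, X_pow_eq_monomial, X_pow_eq_monomial, monomial_mul, monomial_mul]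
  simp only [tri, one_mul]

/-- the exponents of the basis monomials -/
noncomputable def mono : Fin 6 → (Fin 3 →₀ ℕ) :=
  ![tri 0 0 0, tri 1 0 0, tri 0 1 0, tri 0 0 1, tri 0 0 2, tri 0 0 3]

/-- basis monomials as polynomials -/
noncomputable def pbas : Fin 6 → MvPolynomial (Fin 3) K :=
  ![1, X 0, X 1, X 2, X 2 ^ 2, X 2 ^ 3]

@[simp] lemma mono0 : mono 0 = tri 0 0 0 := rfl
@[simp] lemma mono1 : mono 1 = tri 1 0 0 := rfl
@[simp] lemma mono2 : mono 2 = tri 0 1 0 := rfl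
@[simp] lemma mono3 : mono 3 = tri 0 0 1 := rfl
@[simp] lemma mono4 : mono 4 = tri 0 0 2 := rfl
@[simp] lemma mono5 : mono 5 = tri 0 0 3 := rfl
@[simp] lemma pbas0 : pbas K 0 = 1 := rfl
@[simp] lemma pbas1 : pbas K 1 = X 0 := rfl
@[simp] lemma pbas2 : pbas K 2 = X 1 := rfl
@[simp] lemma pbas3 : pbas K 3 = X 2 := rfl
@[simp] lemma pbas4 : pbas K 4 = X 2 ^ 2 := rfl
@[simp] lemma pbas5 : pbas K 5 = X 2 ^ 3 := rfl

/-- coordinates -/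
noncomputable def phi : MvPolynomial (Fin 3) K →ₗ[K] (Fin 6 → K) where
  toFun p i := coeff (mono i) p + if i = 5 then coeff (tri 1 1 0) p else 0
  map_add' p r := by
    funext i
    by_cases h : i = 5 <;> simp [h, coeff_add] <;> ring
  map_smul' c p := by
    funext i
    by_cases h : i = 5 <;> simp [h, coeff_smul, smul_eq_mul] <;> ring

lemma phi_pbas (i : Fin 6) : phi K (pbas K i) = Pi.single i 1 := by
  funext j
  fin_cases i <;> fin_cases j <;>
    simp [phi, coeff_X_pow, coeff_X', coeff_one, tri_eq_tri, Pi.single_apply]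

lemma X01 : (X 0 * X 1 : MvPolynomial (Fin 3) K) = monomial (tri 1 1 0) 1 := by
  rw [monomial_tri]; ring

lemma phi_X01 : phi K (X 0 * X 1) = Pi.single 5 1 := by
  funext j
  fin_cases j <;>
    simp [phi, X01, coeff_monomial, tri_eq_tri, Pi.single_apply]

lemma phi_vanish : ∀ p ∈ Iid K, phi K p = 0 := by
  have key : ∀ r : MvPolynomial (Fin 3) K,
      ∀ g ∈ ({X 0 ^ 2, X 1 ^ 2, X 0 * X 2, X 1 * X 2, X 0 * X 1 - X 2 ^ 3} :
        Set (MvPolynomial (Fin 3) K)), phi K (r * g) = 0 := by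
    intro r g hg
    simp only [Set.mem_insert_iff, Set.mem_singleton_iff] at hg
    rcases hg with rfl | rfl | rfl | rfl | rfl
    · rw [show r * X 0 ^ 2 = r * X 0 * X 0 by ring]
      funext j; fin_cases j <;>
        simp [phi, coeff_mul_X', Finsupp.mem_support_iff]
    · rw [show r * X 1 ^ 2 = r * X 1 * X 1 by ring]
      funext j; fin_cases j <;>
        simp [phi, coeff_mul_X', Finsupp.mem_support_iff]
    · rw [show r * (X 0 * X 2) = r * X 0 * X 2 by ring]
      funext j; fin_cases j <;>
        simp [phi, coeff_mul_X', Finsupp.mem_support_iff]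
    · rw [show r * (X 1 * X 2) = r * X 1 * X 2 by ring]
      funext j; fin_cases j <;>
        simp [phi, coeff_mul_X', Finsupp.mem_support_iff]
    · rw [show r * (X 0 * X 1 - X 2 ^ 3) = r * X 0 * X 1 - r * X 2 * X 2 * X 2 by ring,
        map_sub]
      funext j; fin_cases j <;>
        simp [phi, coeff_mul_X', Finsupp.mem_support_iff]
  intro p hp
  have H : ∀ x, x ∈ Iid K → ∀ r, phi K (r * x) = 0 := by
    intro x hx
    refine Submodule.span_induction ?_ ?_ ?_ ?_ hx
    · intro g hg r; exact key r g hg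
    · intro r; simp
    · intro x y _ _ hx hy r; rw [mul_add, map_add, hx, hy, add_zero]
    · intro a x _ hx r
      rw [smul_eq_mul, show r * (a * x) = (r * a) * x by ring]
      exact hx (r * a)
  simpa using H p hp 1

/-- the quotient algebra -/
noncomputable abbrev A5 := MvPolynomial (Fin 3) K ⧸ Iid K

noncomputable abbrev mk' : MvPolynomial (Fin 3) K →+* A5 K := Ideal.Quotient.mk (Iid K)

/-- images of the basis monomials -/
noncomputable def bq : Fin 6 → A5 K := fun i => mk' K (pbas K i)

@[simp] lemma bq0 : bq K 0 = 1 := map_one _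

/-- coordinates on the quotient -/
noncomputable def PhiQ : A5 K →ₗ[K] (Fin 6 → K) :=
  (Submodule.liftQ ((Iid K).restrictScalars K) (phi K)
    (fun x hx => phi_vanish K x hx)).comp
    (Submodule.Quotient.restrictScalarsEquiv K (Iid K)).symm.toLinearMap

lemma PhiQ_mk (p : MvPolynomial (Fin 3) K) : PhiQ K (mk' K p) = phi K p := rfl

noncomputable def pv : (Fin 6 → K) →ₗ[K] MvPolynomial (Fin 3) K where
  toFun v := ∑ i, v i • pbas K i
  map_add' v w := by simp [add_smul, Finset.sum_add_distrib]
  map_smul' c v := by simp [smul_smul, Finset.smul_sum]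

noncomputable def mkL : MvPolynomial (Fin 3) K →ₗ[K] A5 K :=
  (Ideal.Quotient.mkₐ K (Iid K)).toLinearMap

lemma mkL_apply (p : MvPolynomial (Fin 3) K) : mkL K p = mk' K p := rfl

noncomputable def psi : (Fin 6 → K) →ₗ[K] A5 K := (mkL K).comp (pv K)

lemma psi_apply (v : Fin 6 → K) : psi K v = ∑ i, v i • bq K i := by
  simp [psi, pv, mkL, bq, map_sum]
  exact Finset.sum_congr rfl fun i _ => map_smul (mkL K) (v i) (pbas K i)

lemma PhiQ_psi (v : Fin 6 → K) : PhiQ K (psi K v) = v := by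
  have : psi K v = mk' K (pv K v) := rfl
  rw [this, PhiQ_mk]
  show phi K (∑ i, v i • pbas K i) = v
  rw [map_sum]
  funext j
  simp [phi_pbas, Finset.sum_apply, Pi.single_apply]

lemma psi_PhiQ (a : A5 K) : psi K (PhiQ K a) = a := by
  obtain ⟨p, rfl⟩ := Ideal.Quotient.mk_surjective (I := Iid K) a
  rw [PhiQ_mk]
  induction p using MvPolynomial.induction_on' with
  | add p q hp hq => rw [map_add, map_add, map_add, hp, hq]
  | monomial u c =>
    have hc : (monomial u c : MvPolynomial (Fin 3) K) = c • monomial u 1 := by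
      simp [smul_monomial]
    rw [hc, map_smul, map_smul]
    rw [show (Ideal.Quotient.mk (Iid K)) (c • monomial u (1:K))
        = c • mk' K (monomial u 1) from map_smul (mkL K) c _]
    congr 1
    -- now the monomial case
    by_cases h0 : u = tri 0 0 0
    · subst h0
      rw [show (monomial (tri 0 0 0) (1:K)) = pbas K 0 by
        rw [monomial_tri]; simp]
      rw [phi_pbas]
      simp [psi_apply, Pi.single_apply, ite_smul, bq]
    · by_cases h1 : u = tri 1 0 0
      · subst h1
        rw [show (monomial (tri 1 0 0) (1:K)) = pbas K 1 by rw [monomial_tri]; simp]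
        rw [phi_pbas]
        simp [psi_apply, Pi.single_apply, ite_smul, bq]
      · by_cases h2 : u = tri 0 1 0
        · subst h2
          rw [show (monomial (tri 0 1 0) (1:K)) = pbas K 2 by rw [monomial_tri]; simp]
          rw [phi_pbas]
          simp [psi_apply, Pi.single_apply, ite_smul, bq]
        · by_cases h3 : u = tri 0 0 1
          · subst h3
            rw [show (monomial (tri 0 0 1) (1:K)) = pbas K 3 by rw [monomial_tri]; simp]
            rw [phi_pbas]
            simp [psi_apply, Pi.single_apply, ite_smul, bq]
          · by_cases h4 : u = tri 0 0 2
            · subst h4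
              rw [show (monomial (tri 0 0 2) (1:K)) = pbas K 4 by rw [monomial_tri]; simp]
              rw [phi_pbas]
              simp [psi_apply, Pi.single_apply, ite_smul, bq]
            · by_cases h5 : u = tri 0 0 3
              · subst h5
                rw [show (monomial (tri 0 0 3) (1:K)) = pbas K 5 by rw [monomial_tri]; simp]
                rw [phi_pbas]
                simp [psi_apply, Pi.single_apply, ite_smul, bq]
              · by_cases h6 : u = tri 1 1 0
                · subst h6
                  rw [← X01, phi_X01]
                  have : psi K (Pi.single 5 1) = mk' K (X 2 ^ 3) := by
                    simp [psi_apply, Pi.single_apply, ite_smul, bq]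
                  rw [this]
                  rw [Ideal.Quotient.eq]
                  exact memI5 K _ 0 0 0 0 (-1) (by ring)
                · -- generic monomial: both sides vanish
                  have hphi : phi K (monomial u 1) = 0 := by
                    funext j
                    fin_cases j <;>
                      simp [phi, coeff_monomial, h0, h1, h2, h3, h4, h5, h6]
                  rw [hphi, map_zero]
                  symm
                  rw [show (0 : A5 K) = mk' K 0 from (map_zero _).symm]
                  rw [Ideal.Quotient.eq, sub_zero]
                  rw [u_decomp u, monomial_tri]
                  apply mem_I_of
                  rw [u_decomp u, tri_eq_tri] at h0 h1 h2 h3 h4 h5 h6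
                  omega

lemma psi_inj : Function.Injective (psi K) := by
  intro a b h
  rw [← PhiQ_psi (K := K) a, ← PhiQ_psi (K := K) b]
  exact congrArg _ (by rw [h])

lemma psi_surj : Function.Surjective (psi K) := fun a => ⟨PhiQ K a, psi_PhiQ K a⟩

lemma psi_single (i : Fin 6) : psi K (Pi.single i 1) = bq K i := by
  simp [psi_apply, Pi.single_apply, ite_smul, bq]

-- multiplication table --------------------------------------------------

lemma p11 : bq K 1 * bq K 1 = 0 := by
  show mk' K (X 0) * mk' K (X 0) = 0
  rw [← map_mul, Ideal.Quotient.eq_zero_iff_mem]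
  exact memI5 K _ 1 0 0 0 0 (by ring)

lemma p12 : bq K 1 * bq K 2 = bq K 5 := by
  show mk' K (X 0) * mk' K (X 1) = mk' K (X 2 ^ 3)
  rw [← map_mul, Ideal.Quotient.eq]
  exact memI5 K _ 0 0 0 0 1 (by ring)

lemma p13 : bq K 1 * bq K 3 = 0 := by
  show mk' K (X 0) * mk' K (X 2) = 0
  rw [← map_mul, Ideal.Quotient.eq_zero_iff_mem]
  exact memI5 K _ 0 0 1 0 0 (by ring)

lemma p14 : bq K 1 * bq K 4 = 0 := by
  show mk' K (X 0) * mk' K (X 2 ^ 2) = 0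
  rw [← map_mul, Ideal.Quotient.eq_zero_iff_mem]
  exact memI5 K _ 0 0 (X 2) 0 0 (by ring)

lemma p15 : bq K 1 * bq K 5 = 0 := by
  show mk' K (X 0) * mk' K (X 2 ^ 3) = 0
  rw [← map_mul, Ideal.Quotient.eq_zero_iff_mem]
  exact memI5 K _ 0 0 (X 2 ^ 2) 0 0 (by ring)

lemma p22 : bq K 2 * bq K 2 = 0 := by
  show mk' K (X 1) * mk' K (X 1) = 0
  rw [← map_mul, Ideal.Quotient.eq_zero_iff_mem]
  exact memI5 K _ 0 1 0 0 0 (by ring)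

lemma p23 : bq K 2 * bq K 3 = 0 := by
  show mk' K (X 1) * mk' K (X 2) = 0
  rw [← map_mul, Ideal.Quotient.eq_zero_iff_mem]
  exact memI5 K _ 0 0 0 1 0 (by ring)

lemma p24 : bq K 2 * bq K 4 = 0 := by
  show mk' K (X 1) * mk' K (X 2 ^ 2) = 0
  rw [← map_mul, Ideal.Quotient.eq_zero_iff_mem]
  exact memI5 K _ 0 0 0 (X 2) 0 (by ring)

lemma p25 : bq K 2 * bq K 5 = 0 := by
  show mk' K (X 1) * mk' K (X 2 ^ 3) = 0
  rw [← map_mul, Ideal.Quotient.eq_zero_iff_mem]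
  exact memI5 K _ 0 0 0 (X 2 ^ 2) 0 (by ring)

lemma p33 : bq K 3 * bq K 3 = bq K 4 := by
  show mk' K (X 2) * mk' K (X 2) = mk' K (X 2 ^ 2)
  rw [← map_mul]; exact congrArg _ (by ring)

lemma p34 : bq K 3 * bq K 4 = bq K 5 := by
  show mk' K (X 2) * mk' K (X 2 ^ 2) = mk' K (X 2 ^ 3)
  rw [← map_mul]; exact congrArg _ (by ring)

lemma p35 : bq K 3 * bq K 5 = 0 := by
  show mk' K (X 2) * mk' K (X 2 ^ 3) = 0
  rw [← map_mul, Ideal.Quotient.eq_zero_iff_mem]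
  exact memI5 K _ 0 0 (X 1) 0 (-(X 2)) (by ring)

lemma p44 : bq K 4 * bq K 4 = 0 := by
  show mk' K (X 2 ^ 2) * mk' K (X 2 ^ 2) = 0
  rw [← map_mul, Ideal.Quotient.eq_zero_iff_mem]
  exact memI5 K _ 0 0 (X 1) 0 (-(X 2)) (by ring)

lemma p45 : bq K 4 * bq K 5 = 0 := by
  show mk' K (X 2 ^ 2) * mk' K (X 2 ^ 3) = 0
  rw [← map_mul, Ideal.Quotient.eq_zero_iff_mem]
  exact memI5 K _ 0 0 (X 1 * X 2) 0 (-(X 2 ^ 2)) (by ring)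

lemma p55 : bq K 5 * bq K 5 = 0 := by
  show mk' K (X 2 ^ 3) * mk' K (X 2 ^ 3) = 0
  rw [← map_mul, Ideal.Quotient.eq_zero_iff_mem]
  exact memI5 K _ 0 0 (X 1 * X 2 ^ 2) 0 (-(X 2 ^ 3)) (by ring)

lemma p21 : bq K 2 * bq K 1 = bq K 5 := by rw [mul_comm]; exact p12 K
lemma p31 : bq K 3 * bq K 1 = 0 := by rw [mul_comm]; exact p13 K
lemma p41 : bq K 4 * bq K 1 = 0 := by rw [mul_comm]; exact p14 K
lemma p51 : bq K 5 * bq K 1 = 0 := by rw [mul_comm]; exact p15 K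
lemma p32 : bq K 3 * bq K 2 = 0 := by rw [mul_comm]; exact p23 K
lemma p42 : bq K 4 * bq K 2 = 0 := by rw [mul_comm]; exact p24 K
lemma p52 : bq K 5 * bq K 2 = 0 := by rw [mul_comm]; exact p25 K
lemma p43 : bq K 4 * bq K 3 = bq K 5 := by rw [mul_comm]; exact p34 K
lemma p53 : bq K 5 * bq K 3 = 0 := by rw [mul_comm]; exact p35 K
lemma p54 : bq K 5 * bq K 4 = 0 := by rw [mul_comm]; exact p45 K

-- column expansions -----------------------------------------------------

lemma col1 (v : Fin 6 → K) : psi K v * bq K 1 = v 0 • bq K 1 + v 2 • bq K 5 := by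
  rw [psi_apply, Finset.sum_mul, Fin.sum_univ_six]
  simp only [smul_mul_assoc, bq0, one_mul, p11, p21, p31, p41, p51]
  simp [add_comm]

lemma col2 (v : Fin 6 → K) : psi K v * bq K 2 = v 0 • bq K 2 + v 1 • bq K 5 := by
  rw [psi_apply, Finset.sum_mul, Fin.sum_univ_six]
  simp only [smul_mul_assoc, bq0, one_mul, p12, p22, p32, p42, p52]
  simp [add_comm]

lemma col3 (v : Fin 6 → K) :
    psi K v * bq K 3 = v 0 • bq K 3 + v 3 • bq K 4 + v 4 • bq K 5 := by
  rw [psi_apply, Finset.sum_mul, Fin.sum_univ_six]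
  simp only [smul_mul_assoc, bq0, one_mul, p13, p23, p33, p43, p53]
  simp [add_comm]

lemma col4 (v : Fin 6 → K) : psi K v * bq K 4 = v 0 • bq K 4 + v 3 • bq K 5 := by
  rw [psi_apply, Finset.sum_mul, Fin.sum_univ_six]
  simp only [smul_mul_assoc, bq0, one_mul, p14, p24, p34, p44, p54]
  simp [add_comm]

lemma col5 (v : Fin 6 → K) : psi K v * bq K 5 = v 0 • bq K 5 := by
  rw [psi_apply, Finset.sum_mul, Fin.sum_univ_six]
  simp only [smul_mul_assoc, bq0, one_mul, p15, p25, p35, p45, p55]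
  simp

-- the augmentation ------------------------------------------------------

lemma ker_cc : Iid K ≤ RingHom.ker (constantCoeff (R := K) (σ := Fin 3)) := by
  rw [Iid, Ideal.span_le]
  rintro g hg
  simp only [Set.mem_insert_iff, Set.mem_singleton_iff] at hg
  rcases hg with rfl | rfl | rfl | rfl | rfl <;>
    simp [RingHom.mem_ker]

noncomputable def eps : A5 K →+* K :=
  Ideal.Quotient.lift (Iid K) constantCoeff (fun p hp => ker_cc K hp)

@[simp] lemma eps_mk (p : MvPolynomial (Fin 3) K) :
    eps K (mk' K p) = constantCoeff p := Ideal.Quotient.lift_mk _ _ _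

lemma eps_psi (v : Fin 6 → K) : eps K (psi K v) = v 0 := by
  have : psi K v = mk' K (pv K v) := rfl
  rw [this, eps_mk]
  simp [pv, smul_eq_C_mul, map_sum, Fin.sum_univ_six]

lemma eps_algebraMap (c : K) : eps K (algebraMap K (A5 K) c) = c := by
  have : algebraMap K (A5 K) c = mk' K (C c) := by
    rw [IsScalarTower.algebraMap_apply K (MvPolynomial (Fin 3) K) (A5 K)]
    rfl
  rw [this, eps_mk, constantCoeff_C]

-- nilpotents and units --------------------------------------------------

lemma Kclosed (J : Ideal (A5 K)) {y : A5 K} (hy : y ∈ J) (c : K) : c • y ∈ J :=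
  J.smul_of_tower_mem c hy

lemma bq3_sq : bq K 3 ^ 2 = bq K 4 := by rw [pow_two, p33]

lemma bq1_nil : bq K 1 ∈ nilradical (A5 K) := mem_nilradical.mpr ⟨2, by rw [pow_two, p11]⟩
lemma bq2_nil : bq K 2 ∈ nilradical (A5 K) := mem_nilradical.mpr ⟨2, by rw [pow_two, p22]⟩
lemma bq3_nil : bq K 3 ∈ nilradical (A5 K) :=
  mem_nilradical.mpr ⟨4, by rw [show (4:ℕ) = 2 * 2 by norm_num, pow_mul, bq3_sq, pow_two, p44]⟩
lemma bq4_nil : bq K 4 ∈ nilradical (A5 K) := mem_nilradical.mpr ⟨2, by rw [pow_two, p44]⟩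
lemma bq5_nil : bq K 5 ∈ nilradical (A5 K) := mem_nilradical.mpr ⟨2, by rw [pow_two, p55]⟩

lemma expand_of_eps_zero {b : A5 K} (h : eps K b = 0) :
    b = PhiQ K b 1 • bq K 1 + PhiQ K b 2 • bq K 2 + PhiQ K b 3 • bq K 3
      + PhiQ K b 4 • bq K 4 + PhiQ K b 5 • bq K 5 := by
  have h0 : PhiQ K b 0 = 0 := by
    rw [← h]
    conv_rhs => rw [← psi_PhiQ K b]
    rw [eps_psi]
  conv_lhs => rw [← psi_PhiQ K b]
  rw [psi_apply, Fin.sum_univ_six, h0]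
  simp

lemma nilmem (b : A5 K) (h : eps K b = 0) : IsNilpotent b := by
  rw [← mem_nilradical, expand_of_eps_zero K h]
  refine add_mem (add_mem (add_mem (add_mem ?_ ?_) ?_) ?_) ?_
  · exact Kclosed K _ (bq1_nil K) _
  · exact Kclosed K _ (bq2_nil K) _
  · exact Kclosed K _ (bq3_nil K) _
  · exact Kclosed K _ (bq4_nil K) _
  · exact Kclosed K _ (bq5_nil K) _

lemma isUnit_of_eps_ne {a : A5 K} (h : eps K a ≠ 0) : IsUnit a := by
  have hn : IsNilpotent (a - algebraMap K (A5 K) (eps K a)) :=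
    nilmem K _ (by simp [map_sub, eps_algebraMap])
  have hu : IsUnit (algebraMap K (A5 K) (eps K a)) :=
    (isUnit_iff_ne_zero.mpr h).map _
  have := hn.isUnit_add_left_of_commute hu (Commute.all _ _)
  rwa [add_sub_cancel] at this

instance : Nontrivial (A5 K) := by
  refine nontrivial_of_ne 1 0 fun h => ?_
  have := congrArg (eps K) h
  simp only [map_one, map_zero] at this
  exact one_ne_zero this

lemma localA : IsLocalRing (A5 K) := by
  refine IsLocalRing.of_isUnit_or_isUnit_one_sub_self fun a => ?_
  by_cases h : eps K a = 0
  · right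
    refine isUnit_of_eps_ne K ?_
    rw [map_sub, map_one, h, sub_zero]
    exact one_ne_zero
  · exact Or.inl (isUnit_of_eps_ne K h)

-- the maximal ideal ------------------------------------------------------

noncomputable def Mid : Ideal (A5 K) :=
  Ideal.span {mk' K (X 0), mk' K (X 1), mk' K (X 2)}

lemma bq1_eq : bq K 1 = mk' K (X 0) := rfl
lemma bq2_eq : bq K 2 = mk' K (X 1) := rfl
lemma bq3_eq : bq K 3 = mk' K (X 2) := rfl

lemma bq1_mem : bq K 1 ∈ Mid K := Ideal.subset_span (by simp [bq1_eq])
lemma bq2_mem : bq K 2 ∈ Mid K := Ideal.subset_span (by simp [bq2_eq])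
lemma bq3_mem : bq K 3 ∈ Mid K := Ideal.subset_span (by simp [bq3_eq])
lemma bq4_mem : bq K 4 ∈ Mid K := by
  rw [← p33]; exact Ideal.mul_mem_left _ _ (bq3_mem K)
lemma bq5_mem : bq K 5 ∈ Mid K := by
  rw [← p34]; exact Ideal.mul_mem_left _ _ (bq4_mem K)

lemma M_le_ker : Mid K ≤ RingHom.ker (eps K) := by
  rw [Mid, Ideal.span_le]
  rintro g hg
  simp only [Set.mem_insert_iff, Set.mem_singleton_iff] at hg
  rcases hg with rfl | rfl | rfl <;> simp [RingHom.mem_ker]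

lemma coordzero {p : A5 K} (hp : p ∈ Mid K) : PhiQ K p 0 = 0 := by
  have h : eps K p = 0 := M_le_ker K hp
  rw [← h]
  conv_rhs => rw [← psi_PhiQ K p]
  rw [eps_psi]

lemma ker_le_M : RingHom.ker (eps K) ≤ Mid K := by
  intro a ha
  rw [RingHom.mem_ker] at ha
  rw [expand_of_eps_zero K ha]
  refine add_mem (add_mem (add_mem (add_mem ?_ ?_) ?_) ?_) ?_
  · exact Kclosed K _ (bq1_mem K) _
  · exact Kclosed K _ (bq2_mem K) _
  · exact Kclosed K _ (bq3_mem K) _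
  · exact Kclosed K _ (bq4_mem K) _
  · exact Kclosed K _ (bq5_mem K) _

lemma M_eq_ker : Mid K = RingHom.ker (eps K) :=
  le_antisymm (M_le_ker K) (ker_le_M K)

lemma eps_surj : Function.Surjective (eps K) := fun c =>
  ⟨algebraMap K (A5 K) c, eps_algebraMap K c⟩

lemma M_max : (Mid K).IsMaximal := by
  rw [M_eq_ker]
  exact RingHom.ker_isMaximal_of_surjective (eps K) (eps_surj K)

lemma bq4_eq : bq K 4 = mk' K (X 2 ^ 2) := rfl
lemma bq5_eq : bq K 5 = mk' K (X 2 ^ 3) := rfl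

-- expansion of a general product ----------------------------------------

lemma mulcol1 (r : A5 K) : r * bq K 1 = PhiQ K r 0 • bq K 1 + PhiQ K r 2 • bq K 5 := by
  conv_lhs => rw [← psi_PhiQ K r]
  exact col1 K _

lemma mulcol2 (r : A5 K) : r * bq K 2 = PhiQ K r 0 • bq K 2 + PhiQ K r 1 • bq K 5 := by
  conv_lhs => rw [← psi_PhiQ K r]
  exact col2 K _

lemma mulcol3 (r : A5 K) :
    r * bq K 3 = PhiQ K r 0 • bq K 3 + PhiQ K r 3 • bq K 4 + PhiQ K r 4 • bq K 5 := by
  conv_lhs => rw [← psi_PhiQ K r]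
  exact col3 K _

lemma mulcol4 (r : A5 K) : r * bq K 4 = PhiQ K r 0 • bq K 4 + PhiQ K r 3 • bq K 5 := by
  conv_lhs => rw [← psi_PhiQ K r]
  exact col4 K _

lemma mulcol5 (r : A5 K) : r * bq K 5 = PhiQ K r 0 • bq K 5 := by
  conv_lhs => rw [← psi_PhiQ K r]
  exact col5 K _

-- span computations ------------------------------------------------------

def sS5 : Set (A5 K) :=
  {mk' K (X 0), mk' K (X 1), mk' K (X 2), mk' K (X 2 ^ 2), mk' K (X 2 ^ 3)}

lemma bq1_mem_span : bq K 1 ∈ Submodule.span K (sS5 K) :=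
  Submodule.subset_span (by rw [bq1_eq]; simp [sS5])
lemma bq2_mem_span : bq K 2 ∈ Submodule.span K (sS5 K) :=
  Submodule.subset_span (by rw [bq2_eq]; simp [sS5])
lemma bq3_mem_span : bq K 3 ∈ Submodule.span K (sS5 K) :=
  Submodule.subset_span (by rw [bq3_eq]; simp [sS5])
lemma bq4_mem_span : bq K 4 ∈ Submodule.span K (sS5 K) :=
  Submodule.subset_span (by rw [bq4_eq]; simp [sS5])
lemma bq5_mem_span : bq K 5 ∈ Submodule.span K (sS5 K) :=
  Submodule.subset_span (by rw [bq5_eq]; simp [sS5])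

lemma mul_mem_spanS5 (r : A5 K) : ∀ x ∈ Submodule.span K (sS5 K),
    r * x ∈ Submodule.span K (sS5 K) := by
  intro x hx
  refine Submodule.span_induction ?_ ?_ ?_ ?_ hx
  · intro t ht
    simp only [sS5, Set.mem_insert_iff, Set.mem_singleton_iff] at ht
    rcases ht with rfl | rfl | rfl | rfl | rfl
    · rw [← bq1_eq, mulcol1]
      exact add_mem (Submodule.smul_mem _ _ (bq1_mem_span K))
        (Submodule.smul_mem _ _ (bq5_mem_span K))
    · rw [← bq2_eq, mulcol2]
      exact add_mem (Submodule.smul_mem _ _ (bq2_mem_span K))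
        (Submodule.smul_mem _ _ (bq5_mem_span K))
    · rw [← bq3_eq, mulcol3]
      exact add_mem (add_mem (Submodule.smul_mem _ _ (bq3_mem_span K))
        (Submodule.smul_mem _ _ (bq4_mem_span K)))
        (Submodule.smul_mem _ _ (bq5_mem_span K))
    · rw [← bq4_eq, mulcol4]
      exact add_mem (Submodule.smul_mem _ _ (bq4_mem_span K))
        (Submodule.smul_mem _ _ (bq5_mem_span K))
    · rw [← bq5_eq, mulcol5]
      exact Submodule.smul_mem _ _ (bq5_mem_span K)
  · simp
  · intro a b _ _ ha hb; rw [mul_add]; exact add_mem ha hb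
  · intro c a _ ha; rw [mul_smul_comm]; exact Submodule.smul_mem _ _ ha

noncomputable def N1 : Ideal (A5 K) where
  carrier := Submodule.span K (sS5 K)
  add_mem' := fun h1 h2 => add_mem h1 h2
  zero_mem' := zero_mem _
  smul_mem' := fun r m hm => mul_mem_spanS5 K r m hm

lemma M_le_N1 : Mid K ≤ N1 K := by
  rw [Mid, Ideal.span_le]
  rintro g hg
  simp only [Set.mem_insert_iff, Set.mem_singleton_iff] at hg
  rcases hg with rfl | rfl | rfl
  · exact bq1_mem_span K
  · exact bq2_mem_span K
  · exact bq3_mem_span K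

lemma M_restrict : (Mid K).restrictScalars K = Submodule.span K (sS5 K) := by
  apply le_antisymm
  · intro a ha
    exact M_le_N1 K ha
  · rw [Submodule.span_le]
    rintro t ht
    simp only [sS5, Set.mem_insert_iff, Set.mem_singleton_iff] at ht
    rcases ht with rfl | rfl | rfl | rfl | rfl
    · exact bq1_mem K
    · exact bq2_mem K
    · exact bq3_mem K
    · exact bq4_mem K
    · exact bq5_mem K

-- M^2 and M^3 ------------------------------------------------------------

def sT2 : Set (A5 K) := {mk' K (X 2 ^ 2), mk' K (X 2 ^ 3)}

lemma bq4_mem_T2 : bq K 4 ∈ Submodule.span K (sT2 K) :=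
  Submodule.subset_span (by rw [bq4_eq]; simp [sT2])
lemma bq5_mem_T2 : bq K 5 ∈ Submodule.span K (sT2 K) :=
  Submodule.subset_span (by rw [bq5_eq]; simp [sT2])

lemma mul_mem_spanT2 {r : A5 K} (hr : r ∈ Mid K) :
    ∀ x ∈ Submodule.span K (sS5 K), r * x ∈ Submodule.span K (sT2 K) := by
  intro x hx
  refine Submodule.span_induction ?_ ?_ ?_ ?_ hx
  · intro t ht
    simp only [sS5, Set.mem_insert_iff, Set.mem_singleton_iff] at ht
    rcases ht with rfl | rfl | rfl | rfl | rfl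
    · rw [← bq1_eq, mulcol1, coordzero K hr, zero_smul, zero_add]
      exact Submodule.smul_mem _ _ (bq5_mem_T2 K)
    · rw [← bq2_eq, mulcol2, coordzero K hr, zero_smul, zero_add]
      exact Submodule.smul_mem _ _ (bq5_mem_T2 K)
    · rw [← bq3_eq, mulcol3, coordzero K hr, zero_smul, zero_add]
      exact add_mem (Submodule.smul_mem _ _ (bq4_mem_T2 K))
        (Submodule.smul_mem _ _ (bq5_mem_T2 K))
    · rw [← bq4_eq, mulcol4]
      exact add_mem (Submodule.smul_mem _ _ (bq4_mem_T2 K))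
        (Submodule.smul_mem _ _ (bq5_mem_T2 K))
    · rw [← bq5_eq, mulcol5]
      exact Submodule.smul_mem _ _ (bq5_mem_T2 K)
  · simp
  · intro a b _ _ ha hb; rw [mul_add]; exact add_mem ha hb
  · intro c a _ ha; rw [mul_smul_comm]; exact Submodule.smul_mem _ _ ha

noncomputable def Zid : Ideal (A5 K) := Ideal.span {mk' K (X 2 ^ 3)}

lemma bq5_mem_Z : bq K 5 ∈ Zid K := by
  rw [bq5_eq]; exact Ideal.subset_span rfl

lemma bq5_eq_pow : bq K 5 = bq K 3 ^ 3 := by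
  rw [pow_succ, bq3_sq, p43]

lemma Z_le_M3 : Zid K ≤ Mid K ^ 3 := by
  rw [Zid, Ideal.span_le]
  rintro t rfl
  rw [← bq5_eq, bq5_eq_pow]
  exact Ideal.pow_mem_pow (bq3_mem K) 3

lemma mul_mem_spanT2_any (r : A5 K) : ∀ x ∈ Submodule.span K (sT2 K),
    r * x ∈ Submodule.span K (sT2 K) := by
  intro x hx
  refine Submodule.span_induction ?_ ?_ ?_ ?_ hx
  · intro t ht
    simp only [sT2, Set.mem_insert_iff, Set.mem_singleton_iff] at ht
    rcases ht with rfl | rfl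
    · rw [← bq4_eq, mulcol4]
      exact add_mem (Submodule.smul_mem _ _ (bq4_mem_T2 K))
        (Submodule.smul_mem _ _ (bq5_mem_T2 K))
    · rw [← bq5_eq, mulcol5]
      exact Submodule.smul_mem _ _ (bq5_mem_T2 K)
  · simp
  · intro a b _ _ ha hb; rw [mul_add]; exact add_mem ha hb
  · intro c a _ ha; rw [mul_smul_comm]; exact Submodule.smul_mem _ _ ha

noncomputable def N2 : Ideal (A5 K) where
  carrier := Submodule.span K (sT2 K)
  add_mem' := fun h1 h2 => add_mem h1 h2
  zero_mem' := zero_mem _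
  smul_mem' := fun r m hm => mul_mem_spanT2_any K r m hm

lemma M2_le_N2 : Mid K * Mid K ≤ N2 K :=
  Ideal.mul_le.mpr fun r hr s hs => mul_mem_spanT2 K hr s (M_le_N1 K hs)

lemma M3_le_Z : Mid K ^ 3 ≤ Zid K := by
  rw [pow_succ, Ideal.mul_le]
  intro r hr s hs
  have hr' : r ∈ Submodule.span K (sT2 K) := M2_le_N2 K (by rwa [pow_two] at hr)
  have hs' : s ∈ Submodule.span K (sS5 K) := M_le_N1 K hs
  refine Submodule.span_induction (p := fun x _ => x * s ∈ Zid K) ?_ ?_ ?_ ?_ hr'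
  · intro t ht
    simp only [sT2, Set.mem_insert_iff, Set.mem_singleton_iff] at ht
    rcases ht with rfl | rfl
    · rw [← bq4_eq]
      refine Submodule.span_induction (p := fun y _ => bq K 4 * y ∈ Zid K) ?_ ?_ ?_ ?_ hs'
      · intro u hu
        simp only [sS5, Set.mem_insert_iff, Set.mem_singleton_iff] at hu
        rcases hu with rfl | rfl | rfl | rfl | rfl
        · rw [← bq1_eq, p41]; exact zero_mem _
        · rw [← bq2_eq, p42]; exact zero_mem _
        · rw [← bq3_eq, p43]; exact bq5_mem_Z K
        · rw [← bq4_eq, p44]; exact zero_mem _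
        · rw [← bq5_eq, p45]; exact zero_mem _
      · simp
      · intro a b _ _ ha hb; rw [mul_add]; exact add_mem ha hb
      · intro c a _ ha; rw [mul_smul_comm]; exact (Zid K).smul_of_tower_mem c ha
    · rw [← bq5_eq]
      refine Submodule.span_induction (p := fun y _ => bq K 5 * y ∈ Zid K) ?_ ?_ ?_ ?_ hs'
      · intro u hu
        simp only [sS5, Set.mem_insert_iff, Set.mem_singleton_iff] at hu
        rcases hu with rfl | rfl | rfl | rfl | rfl
        · rw [← bq1_eq, p51]; exact zero_mem _
        · rw [← bq2_eq, p52]; exact zero_mem _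
        · rw [← bq3_eq, p53]; exact zero_mem _
        · rw [← bq4_eq, p54]; exact zero_mem _
        · rw [← bq5_eq, p55]; exact zero_mem _
      · simp
      · intro a b _ _ ha hb; rw [mul_add]; exact add_mem ha hb
      · intro c a _ ha; rw [mul_smul_comm]; exact (Zid K).smul_of_tower_mem c ha
  · simp
  · intro a b _ _ ha hb; rw [add_mul]; exact add_mem ha hb
  · intro c a _ ha; rw [smul_mul_assoc]; exact (Zid K).smul_of_tower_mem c ha

lemma M3_eq_Z : Mid K ^ 3 = Zid K := le_antisymm (M3_le_Z K) (Z_le_M3 K)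

-- coefficient extraction --------------------------------------------------

lemma vanish_coeffs (w : Fin 6 → K) (h : psi K w = 0) : ∀ i, w i = 0 := by
  have hw : w = 0 := psi_inj K (by rw [h, map_zero])
  intro i; rw [hw]; rfl

lemma psi_col1 (c e : K) : psi K ![0, c, 0, 0, 0, e] = c • bq K 1 + e • bq K 5 := by
  rw [psi_apply]
  simp [Fin.sum_univ_succ]

lemma psi_col2 (c e : K) : psi K ![0, 0, c, 0, 0, e] = c • bq K 2 + e • bq K 5 := by
  rw [psi_apply]
  simp [Fin.sum_univ_succ]

lemma psi_col3' (c d e : K) :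
    psi K ![0, 0, 0, c, d, e] = c • bq K 3 + d • bq K 4 + e • bq K 5 := by
  rw [psi_apply]
  simp [Fin.sum_univ_succ, add_assoc]

-- the colon ideal ----------------------------------------------------------

lemma colon_le : (⊥ : Ideal (A5 K)).colon (Mid K) ≤ Zid K := by
  intro a ha
  have hx : a * bq K 1 = 0 := by
    have := Submodule.mem_colon.mp ha (bq K 1) (bq1_mem K)
    simpa using this
  have hy : a * bq K 2 = 0 := by
    have := Submodule.mem_colon.mp ha (bq K 2) (bq2_mem K)
    simpa using this
  have hz : a * bq K 3 = 0 := by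
    have := Submodule.mem_colon.mp ha (bq K 3) (bq3_mem K)
    simpa using this
  rw [mulcol1] at hx
  rw [mulcol2] at hy
  rw [mulcol3] at hz
  have Hx := vanish_coeffs K _ (by rw [psi_col1, hx])
  have Hy := vanish_coeffs K _ (by rw [psi_col2, hy])
  have Hz := vanish_coeffs K _ (by rw [psi_col3', hz])
  have h0 : PhiQ K a 0 = 0 := Hx 1
  have h1 : PhiQ K a 1 = 0 := Hy 5
  have h2 : PhiQ K a 2 = 0 := Hx 5
  have h3 : PhiQ K a 3 = 0 := Hz 4
  have h4 : PhiQ K a 4 = 0 := Hz 5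
  have ha5 : a = PhiQ K a 5 • bq K 5 := by
    conv_lhs => rw [← psi_PhiQ K a]
    rw [psi_apply, Fin.sum_univ_six, h0, h1, h2, h3, h4]
    simp
  rw [ha5]
  exact (Zid K).smul_of_tower_mem _ (bq5_mem_Z K)

lemma colon_ge : Zid K ≤ (⊥ : Ideal (A5 K)).colon (Mid K) := by
  rw [Zid, Ideal.span_le]
  rintro t rfl
  rw [SetLike.mem_coe]
  rw [Submodule.mem_colon]
  intro p hp
  rw [smul_eq_mul, Submodule.mem_bot]
  rw [mul_comm, ← bq5_eq, mulcol5, coordzero K hp, zero_smul]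

lemma colon_eq : (⊥ : Ideal (A5 K)).colon (Mid K) = Mid K ^ 3 := by
  rw [M3_eq_Z]
  exact le_antisymm (colon_le K) (colon_ge K)

lemma M3_restrict : (Mid K ^ 3).restrictScalars K
    = Submodule.span K {mk' K (X 2 ^ 3)} := by
  apply le_antisymm
  · intro a ha
    have ha' : a ∈ Zid K := M3_le_Z K ha
    obtain ⟨r, hr⟩ := Ideal.mem_span_singleton'.mp ha'
    rw [← hr, ← bq5_eq, mulcol5]
    exact Submodule.smul_mem _ _ (Submodule.subset_span rfl)
  · rw [Submodule.span_le]
    rintro t rfl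
    exact Z_le_M3 K (Ideal.subset_span rfl)

-- dimension facts -----------------------------------------------------------

lemma bq5_ne : bq K 5 ≠ 0 := by
  intro h
  have h2 : psi K (Pi.single 5 1) = 0 := by rw [psi_single, h]
  have := vanish_coeffs K _ h2 5
  simp at this

lemma finrank6 : Module.finrank K (A5 K) = 6 := by
  have E : (Fin 6 → K) ≃ₗ[K] A5 K :=
    LinearEquiv.ofBijective (psi K) ⟨psi_inj K, psi_surj K⟩
  rw [← E.finrank_eq]
  simp

lemma li_bq : LinearIndependent K (bq K) := by
  have h := (Pi.basisFun K (Fin 6)).linearIndependent.map' (psi K)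
    (LinearMap.ker_eq_bot.mpr (psi_inj K))
  have he : (psi K ∘ ⇑(Pi.basisFun K (Fin 6))) = bq K := by
    funext i
    simp [Pi.basisFun_apply, psi_single]
  rwa [he] at h

lemma li_final : LinearIndependent K
    ![mk' K (X 0), mk' K (X 1), mk' K (X 2), mk' K (X 2 ^ 2), mk' K (X 2 ^ 3)] := by
  have h5 := (li_bq K).comp Fin.succ (Fin.succ_injective 5)
  have he : (bq K ∘ Fin.succ)
      = ![mk' K (X 0), mk' K (X 1), mk' K (X 2), mk' K (X 2 ^ 2), mk' K (X 2 ^ 3)] := by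
    funext j
    fin_cases j <;> rfl
  rwa [he] at h5

end Stmt13

set_option synthInstance.maxHeartbeats 1000000 in
set_option maxHeartbeats 1000000 in
/-- `A_5 = K[x,y,z]/(x^2, y^2, xz, yz, xy - z^3)` is a 6-dimensional local
Gorenstein `K`-algebra: its maximal ideal `m` has basis the classes of
`x, y, z, z^2, z^3`, and `Soc A_5 = m^3 = ⟨z^3⟩` is one-dimensional. -/
theorem stmt13 (K : Type*) [Field K] [CharZero K] :
    let I : Ideal (MvPolynomial (Fin 3) K) :=
      Ideal.span {X 0 ^ 2, X 1 ^ 2, X 0 * X 2, X 1 * X 2, X 0 * X 1 - X 2 ^ 3};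
    let A := MvPolynomial (Fin 3) K ⧸ I;
    let q : MvPolynomial (Fin 3) K →+* A := Ideal.Quotient.mk I;
    let M : Ideal A := Ideal.span {q (X 0), q (X 1), q (X 2)};
    IsLocalRing A ∧ M.IsMaximal ∧ Module.finrank K A = 6 ∧
      LinearIndependent K
        ![q (X 0), q (X 1), q (X 2), q (X 2 ^ 2), q (X 2 ^ 3)] ∧
      M.restrictScalars K =
        Submodule.span K {q (X 0), q (X 1), q (X 2), q (X 2 ^ 2), q (X 2 ^ 3)} ∧
      (⊥ : Ideal A).colon M = M ^ 3 ∧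
      (M ^ 3).restrictScalars K = Submodule.span K {q (X 2 ^ 3)} ∧
      Module.finrank K (((⊥ : Ideal A).colon M).restrictScalars K) = 1 := by
  intro I A q M
  refine ⟨Stmt13.localA K, Stmt13.M_max K, Stmt13.finrank6 K, Stmt13.li_final K,
    Stmt13.M_restrict K, Stmt13.colon_eq K, Stmt13.M3_restrict K, ?_⟩
  rw [show (⊥ : Ideal A).colon M = M ^ 3 from Stmt13.colon_eq K,
    show (M ^ 3).restrictScalars K = Submodule.span K {q (X 2 ^ 3)} from Stmt13.M3_restrict K]
  exact finrank_span_singleton (Stmt13.bq5_ne K)
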